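/- Suppose h ∈ ℂ satisfies ‖hW‖ < 1 (operator norm) and Σ_{n=1}^∞ N^n |κ_n| |h|^n < 1. Then I − hW is invertible, the series Σ_{n=1}^∞ N^n κ_n h^n converges absolutely to a value different from 1, and the network transfer function satisfies eᵀ (I − hW)^{-1} e · h = h / (1 − Σ_{n=1}^∞ N^n κ_n h^n). (Theorem 1 of the paper: the network transfer function is determined by the chain motif cumulants through a feedback hierarchy.) -/

import Mathlib

open Matrix Finset
open scoped InnerProductSpace

set_option maxHeartbeats 2000000 in
set_option synthInstance.maxHeartbeats 1000000 in
theorem network_transfer_function_motif_cumulant_resumming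
    (N : ℕ) (hN : 0 < N) (W : Matrix (Fin N) (Fin N) ℂ)
    (e : Fin N → ℂ) (he : e = fun _ => ((Real.sqrt N : ℂ))⁻¹)
    (μ κ : ℕ → ℂ)
    (hμ0 : μ 0 = 1)
    (hμ : ∀ n : ℕ, 1 ≤ n →
      μ n = (1 / (N : ℂ) ^ (n + 1)) * ∑ i : Fin N, ∑ j : Fin N, (W ^ n) i j)
    (hκ : ∀ n : ℕ, 1 ≤ n →
      κ n = μ n - ∑ k ∈ Finset.Ico 1 n, κ k * μ (n - k))
    (h : ℂ)
    (hnorm : ‖Matrix.toEuclideanCLM (𝕜 := ℂ) (h • W)‖ < 1)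
    (S : ℝ)
    (hS : HasSum (fun n : ℕ =>
      (N : ℝ) ^ (n + 1) * ‖κ (n + 1)‖ * ‖h‖ ^ (n + 1)) S)
    (hS1 : S < 1) :
    IsUnit (1 - h • W) ∧
    ∃ T : ℂ,
      HasSum (fun n : ℕ => (N : ℂ) ^ (n + 1) * κ (n + 1) * h ^ (n + 1)) T ∧
      T ≠ 1 ∧
      e ⬝ᵥ (1 - h • W)⁻¹.mulVec e * h = h / (1 - T) := by
  classical
  have hNR : (0:ℝ) < N := by exact_mod_cast hN
  have hNC : (N : ℂ) ≠ 0 := by exact_mod_cast hN.ne'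
  set A : Matrix (Fin N) (Fin N) ℂ := h • W with hA
  set t : EuclideanSpace ℂ (Fin N) →L[ℂ] EuclideanSpace ℂ (Fin N) :=
    Matrix.toEuclideanCLM (𝕜 := ℂ) A with ht
  have hr : ‖t‖ < 1 := hnorm
  have hsum_t : Summable (fun n : ℕ => t ^ n) := summable_geometric_of_norm_lt_one hr
  set P : EuclideanSpace ℂ (Fin N) →L[ℂ] EuclideanSpace ℂ (Fin N) := ∑' n : ℕ, t ^ n with hP
  have h1 : (1 - t) * P = 1 := mul_neg_geom_series t hr
  have h2 : P * (1 - t) = 1 := geom_series_mul_neg t hr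
  set Q : Matrix (Fin N) (Fin N) ℂ := (Matrix.toEuclideanCLM (𝕜 := ℂ)).symm P with hQ
  have htQ : Matrix.toEuclideanCLM (𝕜 := ℂ) Q = P := by
    rw [hQ]; exact StarAlgEquiv.apply_symm_apply _ _
  have hsymm : (Matrix.toEuclideanCLM (𝕜 := ℂ)).symm (1 - t) = 1 - A := by
    rw [_root_.map_sub, _root_.map_one, ht, StarAlgEquiv.symm_apply_apply]
  have hmulQ : (1 - A) * Q = 1 := by
    have h1' := congrArg (Matrix.toEuclideanCLM (𝕜 := ℂ)).symm h1
    rwa [_root_.map_mul, _root_.map_one, hsymm, ← hQ] at h1'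
  have hQmul : Q * (1 - A) = 1 := by
    have h2' := congrArg (Matrix.toEuclideanCLM (𝕜 := ℂ)).symm h2
    rwa [_root_.map_mul, _root_.map_one, hsymm, ← hQ] at h2'
  have hunit : IsUnit (1 - A) := ⟨⟨1 - A, Q, hmulQ, hQmul⟩, rfl⟩
  have hinvQ : (1 - A)⁻¹ = Q := Matrix.inv_eq_right_inv hmulQ
  -- the normalized vector in Euclidean space
  set e' : EuclideanSpace ℂ (Fin N) := (WithLp.equiv 2 (Fin N → ℂ)).symm e with he'
  have he'app : ∀ i, e' i = ((Real.sqrt N : ℂ))⁻¹ := by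
    intro i; rw [he', he]; rfl
  have he'norm : ‖e'‖ = 1 := by
    rw [EuclideanSpace.norm_eq]
    have h1 : ∀ i : Fin N, ‖e' i‖ = (Real.sqrt N)⁻¹ := by
      intro i
      rw [he'app i]
      simp [Real.sqrt_nonneg]
    simp only [h1]
    rw [Finset.sum_const, Finset.card_univ, Fintype.card_fin, inv_pow,
      Real.sq_sqrt hNR.le, nsmul_eq_mul, mul_inv_cancel₀ hNR.ne']
    exact Real.sqrt_one
  haveI : Nontrivial (EuclideanSpace ℂ (Fin N)) :=
    nontrivial_of_ne e' 0 (norm_ne_zero_iff.mp (by rw [he'norm]; norm_num))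
  -- the functional u ↦ ⟪e', u e'⟫
  set ψ : (EuclideanSpace ℂ (Fin N) →L[ℂ] EuclideanSpace ℂ (Fin N)) →L[ℂ] ℂ :=
    (innerSL ℂ e').comp (ContinuousLinearMap.apply ℂ (EuclideanSpace ℂ (Fin N)) e') with hψ
  have hψ_apply : ∀ u, ψ u = ⟪e', u e'⟫_ℂ := fun u => rfl
  -- bridging: ψ (toEuclideanCLM B) = e ⬝ᵥ B.mulVec e
  have hconj : (starRingEnd ℂ) (((Real.sqrt N : ℝ) : ℂ))⁻¹ = ((Real.sqrt N : ℝ) : ℂ)⁻¹ := by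
    rw [map_inv₀, Complex.conj_ofReal]
  have hbridge : ∀ B : Matrix (Fin N) (Fin N) ℂ,
      ψ (Matrix.toEuclideanCLM (𝕜 := ℂ) B) = e ⬝ᵥ B.mulVec e := by
    intro B
    rw [hψ_apply]
    have : (Matrix.toEuclideanCLM (𝕜 := ℂ) B) e' =
        (WithLp.equiv 2 (Fin N → ℂ)).symm (B.mulVec e) := by
      rw [he', WithLp.equiv_symm_apply, Matrix.toEuclideanCLM_toLp]
    rw [this]
    rw [PiLp.inner_apply]
    simp only [WithLp.equiv_symm_apply, WithLp.ofLp_toLp, RCLike.inner_apply]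
    rw [dotProduct]
    congr 1
    ext i
    rw [he', he]
    simp only [WithLp.equiv_symm_apply, WithLp.ofLp_toLp]
    rw [hconj, mul_comm]
  -- ψ bound
  have hψ_bound : ∀ u, ‖ψ u‖ ≤ ‖u‖ := by
    intro u
    rw [hψ_apply]
    calc ‖⟪e', u e'⟫_ℂ‖ ≤ ‖e'‖ * ‖u e'‖ := norm_inner_le_norm _ _
    _ ≤ ‖e'‖ * (‖u‖ * ‖e'‖) := by
        gcongr; exact u.le_opNorm e'
    _ = ‖u‖ := by rw [he'norm]; ring
  -- the moment sequence
  set m : ℕ → ℂ := fun n => e ⬝ᵥ (A ^ n).mulVec e with hm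
  have hψ_pow : ∀ n : ℕ, ψ (t ^ n) = m n := by
    intro n
    rw [ht, ← map_pow]
    exact hbridge _
  have hm_bound : ∀ n : ℕ, ‖m n‖ ≤ ‖t‖ ^ n := by
    intro n
    rw [← hψ_pow]
    exact (hψ_bound _).trans (norm_pow_le _ _)
  have hm_norm_summable : Summable fun n => ‖m n‖ :=
    Summable.of_nonneg_of_le (fun n => norm_nonneg _) hm_bound
      (summable_geometric_of_lt_one (norm_nonneg t) hr)
  -- HasSum m M
  set M : ℂ := ψ P with hM
  have hsum_m : HasSum m M := by
    have := ψ.hasSum hsum_t.hasSum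
    simpa only [hψ_pow] using this
  have hMQ : e ⬝ᵥ Q.mulVec e = M := by
    rw [hM, ← htQ, hbridge]
  -- m in terms of μ
  have hsq : ((Real.sqrt N : ℝ) : ℂ)⁻¹ * ((Real.sqrt N : ℝ) : ℂ)⁻¹ = (N : ℂ)⁻¹ := by
    rw [← mul_inv]
    congr 1
    rw [← Complex.ofReal_mul, Real.mul_self_sqrt hNR.le]
    norm_num
  have hm0 : m 0 = 1 := by
    rw [hm]
    simp only [pow_zero, Matrix.one_mulVec]
    rw [dotProduct, he]
    simp only
    rw [Finset.sum_const, Finset.card_univ, Fintype.card_fin, nsmul_eq_mul, hsq,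
      mul_inv_cancel₀ hNC]
  have hm_eq : ∀ n : ℕ, m n = (N : ℂ) ^ n * μ n * h ^ n := by
    intro n
    rcases Nat.eq_zero_or_pos n with rfl | hn
    · simp [hm0, hμ0]
    · have hWn : e ⬝ᵥ (W ^ n).mulVec e =
          (N : ℂ)⁻¹ * ∑ i : Fin N, ∑ j : Fin N, (W ^ n) i j := by
        rw [dotProduct, he]
        simp only [Matrix.mulVec, dotProduct]
        rw [Finset.mul_sum]
        congr 1
        ext i
        rw [Finset.mul_sum, Finset.mul_sum]
        congr 1
        ext j
        rw [← hsq]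
        ring
      have hmn : m n = e ⬝ᵥ ((h • W) ^ n).mulVec e := rfl
      rw [hmn, smul_pow, Matrix.smul_mulVec, dotProduct_smul,
        smul_eq_mul, hWn, hμ n hn]
      have : (∑ i : Fin N, ∑ j : Fin N, (W ^ n) i j) =
          (N : ℂ) ^ (n + 1) * ((1 / (N : ℂ) ^ (n + 1)) *
            ∑ i : Fin N, ∑ j : Fin N, (W ^ n) i j) := by
        field_simp
      rw [this]
      have hNpow : ((N : ℂ) ^ (n+1)) ≠ 0 := pow_ne_zero _ hNC
      field_simp
      ring
  -- the cumulant sequence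
  set c : ℕ → ℂ := fun n => (N : ℂ) ^ (n + 1) * κ (n + 1) * h ^ (n + 1) with hc
  have hc_norm : ∀ n, ‖c n‖ = (N : ℝ) ^ (n + 1) * ‖κ (n + 1)‖ * ‖h‖ ^ (n + 1) := by
    intro n
    rw [hc]
    simp only [norm_mul, norm_pow, Complex.norm_natCast]
  have hc_norm_summable : Summable fun n => ‖c n‖ := by
    simp only [hc_norm]; exact hS.summable
  have hc_summable : Summable c := hc_norm_summable.of_norm
  set T : ℂ := ∑' n, c n with hT
  have hsum_c : HasSum c T := hc_summable.hasSum
  have hTS : ‖T‖ ≤ S := by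
    have := norm_tsum_le_tsum_norm hc_norm_summable
    rw [← hT] at this
    calc ‖T‖ ≤ ∑' n, ‖c n‖ := this
    _ = S := by simp only [hc_norm]; exact hS.tsum_eq
  have hT1 : T ≠ 1 := by
    intro hTe
    rw [hTe] at hTS
    simp at hTS
    linarith
  -- recursion: μ (n+1) = ∑_{k<n+1} κ (k+1) μ (n-k)
  have hμrec : ∀ n : ℕ, μ (n + 1) = ∑ k ∈ range (n + 1), κ (k + 1) * μ (n - k) := by
    intro n
    have hk := hκ (n + 1) (Nat.le_add_left 1 n)
    rw [Finset.sum_range_succ]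
    have hIco : ∑ k ∈ Finset.Ico 1 (n + 1), κ k * μ (n + 1 - k) =
        ∑ k ∈ range n, κ (k + 1) * μ (n - k) := by
      rw [Finset.sum_Ico_eq_sum_range]
      apply Finset.sum_congr (by norm_num)
      intro k hk
      have e1 : 1 + k = k + 1 := by omega
      have e2 : n + 1 - (1 + k) = n - k := by omega
      rw [e2, e1]
    rw [Nat.sub_self, hμ0, mul_one, ← hIco]
    rw [hk]
    ring
  -- recursion for m
  have hmrec : ∀ n : ℕ, m (n + 1) = ∑ k ∈ range (n + 1), c k * m (n - k) := by
    intro n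
    have : ∀ k ∈ range (n + 1), c k * m (n - k) =
        (N : ℂ) ^ (n + 1) * h ^ (n + 1) * (κ (k + 1) * μ (n - k)) := by
      intro k hk
      rw [Finset.mem_range] at hk
      rw [hc, hm_eq]
      have hkn : (k + 1) + (n - k) = n + 1 := by omega
      rw [← hkn, pow_add, pow_add]
      ring
    rw [Finset.sum_congr rfl this, ← Finset.mul_sum, ← hμrec, hm_eq]
    ring
  -- Cauchy product
  have hcauchy : HasSum (fun n => ∑ k ∈ range (n + 1), c k * m (n - k)) (T * M) := by
    have := hasSum_sum_range_mul_of_summable_norm hc_norm_summable hm_norm_summable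
    rwa [hsum_c.tsum_eq, hsum_m.tsum_eq] at this
  have hshift : HasSum (fun n => m (n + 1)) (M - 1) := by
    rw [hasSum_nat_add_iff (f := m) 1]
    convert hsum_m using 1
    · rfl
    rw [Finset.range_one, Finset.sum_singleton, hm0]
    ring
  have hTM : T * M = M - 1 := by
    have : HasSum (fun n => m (n + 1)) (T * M) := by
      simpa only [← hmrec] using hcauchy
    exact this.unique hshift
  have h1T : (1 : ℂ) - T ≠ 0 := sub_ne_zero_of_ne (Ne.symm hT1)
  have hMone : M * (1 - T) = 1 := by linear_combination -hTM
  refine ⟨hunit, T, hsum_c, hT1, ?_⟩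
  rw [hinvQ, hMQ, eq_div_iff h1T]
  linear_combination h * hMone
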